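/- arXiv:math/0608600 — 2 statements merged into one kernel-verified Lean document; each statement's English description precedes it below -/
import Mathlib

section
/- For ζ = x + iy ∈ ℂ and q ∈ ℂ with |q| < 1, the identity ϑ₁(ζ,q)·ϑ₁(ζ̄,q) + ϑ₂(ζ,q)·ϑ₂(ζ̄,q) = 2 Σ_{(u,v)∈ℤ²} e^{4iux} e^{2i(2v+1)iy} q^{2u² + (2v+1)²/2} holds, where the theta functions are defined by their series ϑ₁(ζ,q) = Σ_k (−1)^{k} i e^{(2k+1)iζ} q^{(k+1/2)²} and ϑ₂(ζ,q) = Σ_k e^{(2k+1)iζ} q^{(k+1/2)²}. -/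
open Complex

/-- `ϑ₁(ζ|τ) = Σ_k i(−1)^k e^{(2k+1)iζ} q^{(k+1/2)²}` with `q = e^{iπτ}`,
`q^s = e^{iπτs}`. -/
noncomputable def theta1 (ζ τ : ℂ) : ℂ :=
  ∑' k : ℤ, (-1 : ℂ) ^ k * Complex.I * Complex.exp ((2 * (k : ℂ) + 1) * Complex.I * ζ) *
    Complex.exp ((Real.pi : ℂ) * Complex.I * τ * ((k : ℂ) + 1 / 2) ^ 2)

/-- `ϑ₂(ζ|τ) = Σ_k e^{(2k+1)iζ} q^{(k+1/2)²}` with `q = e^{iπτ}`. -/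
noncomputable def theta2 (ζ τ : ℂ) : ℂ :=
  ∑' k : ℤ, Complex.exp ((2 * (k : ℂ) + 1) * Complex.I * ζ) *
    Complex.exp ((Real.pi : ℂ) * Complex.I * τ * ((k : ℂ) + 1 / 2) ^ 2)

lemma summable_aux (a τ : ℂ) (hτ : 0 < τ.im) :
    Summable (fun k : ℤ => Complex.exp (a * (k : ℂ)) *
      Complex.exp ((Real.pi : ℂ) * Complex.I * τ * ((k : ℂ) + 1 / 2) ^ 2)) := by
  have h := (summable_jacobiTheta₂_term_iff (a / (2 * (Real.pi : ℂ) * Complex.I) + τ / 2) τ).mpr hτ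
  refine ((h.mul_left (Complex.exp ((Real.pi : ℂ) * Complex.I * τ / 4))).congr ?_)
  intro k
  rw [jacobiTheta₂_term, ← Complex.exp_add, ← Complex.exp_add]
  congr 1
  have h2 : (2 * (Real.pi : ℂ) * Complex.I) ≠ 0 := by
    simp [ofReal_ne_zero.mpr Real.pi_ne_zero, I_ne_zero]
  have key : 2 * (Real.pi : ℂ) * Complex.I * (a / (2 * (Real.pi : ℂ) * Complex.I)) = a :=
    mul_div_cancel₀ _ h2
  linear_combination (k : ℂ) * key

lemma summable_theta2_term (ζ τ : ℂ) (hτ : 0 < τ.im) :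
    Summable (fun k : ℤ => Complex.exp ((2 * (k : ℂ) + 1) * Complex.I * ζ) *
      Complex.exp ((Real.pi : ℂ) * Complex.I * τ * ((k : ℂ) + 1 / 2) ^ 2)) := by
  refine ((summable_aux (2 * Complex.I * ζ) τ hτ).mul_left (Complex.exp (Complex.I * ζ))).congr
    fun k => ?_
  rw [← mul_assoc, ← Complex.exp_add]
  congr 2
  ring

lemma summable_theta1_term (ζ τ : ℂ) (hτ : 0 < τ.im) :
    Summable (fun k : ℤ => (-1 : ℂ) ^ k * Complex.I *
      Complex.exp ((2 * (k : ℂ) + 1) * Complex.I * ζ) *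
      Complex.exp ((Real.pi : ℂ) * Complex.I * τ * ((k : ℂ) + 1 / 2) ^ 2)) := by
  refine ((summable_aux ((Real.pi : ℂ) * Complex.I + 2 * Complex.I * ζ) τ hτ).mul_left
    (Complex.I * Complex.exp (Complex.I * ζ))).congr fun k => ?_
  have hk : ((-1 : ℂ)) ^ k = Complex.exp ((k : ℂ) * ((Real.pi : ℂ) * Complex.I)) := by
    rw [Complex.exp_int_mul, Complex.exp_pi_mul_I]
  calc Complex.I * Complex.exp (Complex.I * ζ) *
      (Complex.exp (((Real.pi : ℂ) * Complex.I + 2 * Complex.I * ζ) * (k : ℂ)) *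
        Complex.exp ((Real.pi : ℂ) * Complex.I * τ * ((k : ℂ) + 1 / 2) ^ 2))
      = Complex.I * Complex.exp (Complex.I * ζ +
          ((Real.pi : ℂ) * Complex.I + 2 * Complex.I * ζ) * (k : ℂ)) *
        Complex.exp ((Real.pi : ℂ) * Complex.I * τ * ((k : ℂ) + 1 / 2) ^ 2) := by
        rw [Complex.exp_add]; ring
    _ = Complex.I * (Complex.exp ((k : ℂ) * ((Real.pi : ℂ) * Complex.I)) *
          Complex.exp ((2 * (k : ℂ) + 1) * Complex.I * ζ)) *
        Complex.exp ((Real.pi : ℂ) * Complex.I * τ * ((k : ℂ) + 1 / 2) ^ 2) := by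
        rw [← Complex.exp_add]
        congr 2
        ring
    _ = (-1 : ℂ) ^ k * Complex.I * Complex.exp ((2 * (k : ℂ) + 1) * Complex.I * ζ) *
        Complex.exp ((Real.pi : ℂ) * Complex.I * τ * ((k : ℂ) + 1 / 2) ^ 2) := by
        rw [hk]; ring

/-- For `ζ = x + iy`, `ϑ₁(ζ)ϑ₁(ζ̄) + ϑ₂(ζ)ϑ₂(ζ̄)
= 2 Σ_{(u,v)} e^{4iux} e^{2i(2v+1)iy} q^{2u² + (2v+1)²/2}`. -/
theorem theta12_product_sum (x y : ℝ) (τ : ℂ) (hτ : 0 < τ.im) :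
    theta1 ((x : ℂ) + (y : ℂ) * Complex.I) τ * theta1 ((x : ℂ) - (y : ℂ) * Complex.I) τ +
      theta2 ((x : ℂ) + (y : ℂ) * Complex.I) τ * theta2 ((x : ℂ) - (y : ℂ) * Complex.I) τ =
    2 * ∑' p : ℤ × ℤ,
      Complex.exp (4 * Complex.I * (p.1 : ℂ) * (x : ℂ)) *
        Complex.exp (2 * Complex.I * (2 * (p.2 : ℂ) + 1) * (Complex.I * (y : ℂ))) *
        Complex.exp ((Real.pi : ℂ) * Complex.I * τ *
          (2 * (p.1 : ℂ) ^ 2 + (2 * (p.2 : ℂ) + 1) ^ 2 / 2)) := by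
  set ζ : ℂ := (x : ℂ) + (y : ℂ) * Complex.I with hζ
  set ξ : ℂ := (x : ℂ) - (y : ℂ) * Complex.I with hξ
  -- summand functions
  set f1 : ℂ → ℤ → ℂ := fun w k => (-1 : ℂ) ^ k * Complex.I *
    Complex.exp ((2 * (k : ℂ) + 1) * Complex.I * w) *
    Complex.exp ((Real.pi : ℂ) * Complex.I * τ * ((k : ℂ) + 1 / 2) ^ 2) with hf1
  set f2 : ℂ → ℤ → ℂ := fun w k => Complex.exp ((2 * (k : ℂ) + 1) * Complex.I * w) *
    Complex.exp ((Real.pi : ℂ) * Complex.I * τ * ((k : ℂ) + 1 / 2) ^ 2) with hf2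
  have hs1 : ∀ w : ℂ, Summable (fun k => ‖f1 w k‖) :=
    fun w => summable_norm_iff.mpr (summable_theta1_term w τ hτ)
  have hs2 : ∀ w : ℂ, Summable (fun k => ‖f2 w k‖) :=
    fun w => summable_norm_iff.mpr (summable_theta2_term w τ hτ)
  have e1 : theta1 ζ τ * theta1 ξ τ = ∑' p : ℤ × ℤ, f1 ζ p.1 * f1 ξ p.2 :=
    tsum_mul_tsum_of_summable_norm (hs1 ζ) (hs1 ξ)
  have e2 : theta2 ζ τ * theta2 ξ τ = ∑' p : ℤ × ℤ, f2 ζ p.1 * f2 ξ p.2 :=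
    tsum_mul_tsum_of_summable_norm (hs2 ζ) (hs2 ξ)
  have hp1 : Summable (fun p : ℤ × ℤ => f1 ζ p.1 * f1 ξ p.2) :=
    summable_mul_of_summable_norm (hs1 ζ) (hs1 ξ)
  have hp2 : Summable (fun p : ℤ × ℤ => f2 ζ p.1 * f2 ξ p.2) :=
    summable_mul_of_summable_norm (hs2 ζ) (hs2 ξ)
  rw [e1, e2, ← Summable.tsum_add hp1 hp2, ← tsum_mul_left]
  set F : ℤ × ℤ → ℂ := fun p => f1 ζ p.1 * f1 ξ p.2 + f2 ζ p.1 * f2 ξ p.2 with hF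
  set g : ℤ × ℤ → ℤ × ℤ := fun p => (p.1 + p.2, p.1 - p.2 - 1) with hg
  have hinj : Function.Injective g := by
    intro p q h
    rw [hg] at h
    simp only [Prod.mk.injEq] at h
    have := h.1; have := h.2
    ext <;> omega
  have hsupp : Function.support F ⊆ Set.range g := by
    intro q hq
    by_contra hnot
    apply hq
    have heven : Even (q.1 + q.2) := by
      rcases Int.even_or_odd (q.1 + q.2) with h | h
      · exact h
      · exfalso
        obtain ⟨m, hm⟩ := h
        exact hnot ⟨(m + 1, q.1 - m - 1), by rw [hg]; ext <;> simp <;> omega⟩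
    have hpar : ((-1 : ℂ)) ^ q.1 * (-1 : ℂ) ^ q.2 = 1 := by
      rw [← zpow_add₀ (by norm_num : (-1 : ℂ) ≠ 0)]
      exact heven.neg_one_zpow
    rw [hF]
    simp only [hf1, hf2]
    have : ((-1 : ℂ) ^ q.1 * Complex.I * Complex.exp ((2 * (q.1 : ℂ) + 1) * Complex.I * ζ) *
        Complex.exp ((Real.pi : ℂ) * Complex.I * τ * ((q.1 : ℂ) + 1 / 2) ^ 2)) *
        ((-1 : ℂ) ^ q.2 * Complex.I * Complex.exp ((2 * (q.2 : ℂ) + 1) * Complex.I * ξ) *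
        Complex.exp ((Real.pi : ℂ) * Complex.I * τ * ((q.2 : ℂ) + 1 / 2) ^ 2)) =
        ((-1 : ℂ) ^ q.1 * (-1 : ℂ) ^ q.2) * (Complex.I * Complex.I) *
        ((Complex.exp ((2 * (q.1 : ℂ) + 1) * Complex.I * ζ) *
          Complex.exp ((Real.pi : ℂ) * Complex.I * τ * ((q.1 : ℂ) + 1 / 2) ^ 2)) *
        (Complex.exp ((2 * (q.2 : ℂ) + 1) * Complex.I * ξ) *
          Complex.exp ((Real.pi : ℂ) * Complex.I * τ * ((q.2 : ℂ) + 1 / 2) ^ 2))) := by ring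
    rw [this, hpar, Complex.I_mul_I]
    ring
  rw [← hinj.tsum_eq hsupp]
  congr 1
  funext p
  have hpar : ((-1 : ℂ)) ^ (p.1 + p.2) * (-1 : ℂ) ^ (p.1 - p.2 - 1) = -1 := by
    rw [← zpow_add₀ (by norm_num : (-1 : ℂ) ≠ 0)]
    have : p.1 + p.2 + (p.1 - p.2 - 1) = 2 * p.1 - 1 := by ring
    rw [this]
    have hodd : Odd (2 * p.1 - 1) := ⟨p.1 - 1, by ring⟩
    exact hodd.neg_one_zpow
  rw [hF, hg]
  simp only [hf1, hf2]
  set k : ℤ := p.1 + p.2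
  set l : ℤ := p.1 - p.2 - 1
  have step : ((-1 : ℂ) ^ k * Complex.I * Complex.exp ((2 * (k : ℂ) + 1) * Complex.I * ζ) *
      Complex.exp ((Real.pi : ℂ) * Complex.I * τ * ((k : ℂ) + 1 / 2) ^ 2)) *
      ((-1 : ℂ) ^ l * Complex.I * Complex.exp ((2 * (l : ℂ) + 1) * Complex.I * ξ) *
      Complex.exp ((Real.pi : ℂ) * Complex.I * τ * ((l : ℂ) + 1 / 2) ^ 2)) +
      (Complex.exp ((2 * (k : ℂ) + 1) * Complex.I * ζ) *
      Complex.exp ((Real.pi : ℂ) * Complex.I * τ * ((k : ℂ) + 1 / 2) ^ 2)) *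
      (Complex.exp ((2 * (l : ℂ) + 1) * Complex.I * ξ) *
      Complex.exp ((Real.pi : ℂ) * Complex.I * τ * ((l : ℂ) + 1 / 2) ^ 2)) =
      (((-1 : ℂ) ^ k * (-1 : ℂ) ^ l) * (Complex.I * Complex.I) + 1) *
      (Complex.exp ((2 * (k : ℂ) + 1) * Complex.I * ζ) *
      Complex.exp ((2 * (l : ℂ) + 1) * Complex.I * ξ) *
      Complex.exp ((Real.pi : ℂ) * Complex.I * τ * ((k : ℂ) + 1 / 2) ^ 2) *
      Complex.exp ((Real.pi : ℂ) * Complex.I * τ * ((l : ℂ) + 1 / 2) ^ 2)) := by ring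
  rw [step, hpar, Complex.I_mul_I]
  rw [← Complex.exp_add, ← Complex.exp_add, ← Complex.exp_add, ← Complex.exp_add,
    ← Complex.exp_add]
  rw [show (-1 : ℂ) * -1 + 1 = 2 by norm_num]
  congr 1
  have hkd : ((k : ℂ)) = (p.1 : ℂ) + (p.2 : ℂ) := by push_cast [k]; ring_nf
  have hld : ((l : ℂ)) = (p.1 : ℂ) - (p.2 : ℂ) - 1 := by push_cast [l]; ring_nf
  rw [hkd, hld, hζ, hξ]
  ring
end

section
/- Let ϕ be a complex number with Re(ϕ) ∈ (0, π] and suppose r ∈ ℂ satisfies r + 1/r = e^{iϕ} − 2 with Im(r) > 0. Then |r| > 1. -/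
/-- If `Re ϕ ∈ (0, π]` and `r` satisfies `r + 1/r = e^{iϕ} - 2` with `Im r > 0`,
then `|r| > 1`. -/
theorem abs_root_gt_one (ϕ r : ℂ) (hre : ϕ.re ∈ Set.Ioc 0 Real.pi) (him : 0 < r.im)
    (h : r + 1 / r = Complex.exp (Complex.I * ϕ) - 2) :
    1 < ‖r‖ := by
  obtain ⟨h0, hpi⟩ := hre
  have hr0 : r ≠ 0 := by
    intro h0'; rw [h0'] at him; simp at him
  have hn : 0 < Complex.normSq r := Complex.normSq_pos.2 hr0
  have hE : 0 < Real.exp (-ϕ.im) := Real.exp_pos _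
  have him_eq : r.im + -r.im / Complex.normSq r
      = Real.exp (-ϕ.im) * Real.sin ϕ.re := by
    have := congrArg Complex.im h
    simpa [Complex.add_im, Complex.sub_im, Complex.exp_im, Complex.mul_re,
      Complex.mul_im, Complex.I_re, Complex.I_im, Complex.inv_im] using this
  have hre_eq : r.re + r.re / Complex.normSq r
      = Real.exp (-ϕ.im) * Real.cos ϕ.re - 2 := by
    have := congrArg Complex.re h
    simpa [Complex.add_re, Complex.sub_re, Complex.exp_re, Complex.mul_re,
      Complex.mul_im, Complex.I_re, Complex.I_im, Complex.inv_re] using this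
  have key : 1 < Complex.normSq r := by
    rcases eq_or_lt_of_le hpi with heq | hlt
    · -- ϕ.re = π
      have hsin : Real.sin ϕ.re = 0 := by rw [heq]; exact Real.sin_pi
      have hn1 : Complex.normSq r = 1 := by
        have h1 : r.im + -r.im / Complex.normSq r = 0 := by
          rw [him_eq, hsin]; ring
        have h2 : r.im * Complex.normSq r - r.im = 0 := by
          field_simp at h1; linarith
        have : r.im * (Complex.normSq r - 1) = 0 := by ring_nf; linarith
        rcases mul_eq_zero.1 this with h' | h'
        · exact absurd h' (ne_of_gt him)
        · linarith
      have hcos : Real.cos ϕ.re = -1 := by rw [heq]; exact Real.cos_pi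
      have h3 : r.re + r.re = -Real.exp (-ϕ.im) - 2 := by
        have := hre_eq
        rw [hn1, hcos] at this
        simpa using this
      -- normSq r = r.re^2 + r.im^2 = 1, but r.re < -1 and r.im > 0: contradiction
      exfalso
      have hsq : r.re * r.re + r.im * r.im = 1 := by
        rw [← Complex.normSq_apply, hn1]
      nlinarith [hE, him, sq_nonneg (r.re + 1)]
    · -- ϕ.re < π
      have hsin : 0 < Real.sin ϕ.re := Real.sin_pos_of_pos_of_lt_pi h0 hlt
      have hpos : 0 < r.im + -r.im / Complex.normSq r := by
        rw [him_eq]; positivity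
      nlinarith [mul_pos him hn, div_mul_cancel₀ (-r.im) (ne_of_gt hn)]
  calc (1:ℝ) = Real.sqrt 1 := by simp
    _ < Real.sqrt (Complex.normSq r) := Real.sqrt_lt_sqrt zero_le_one key
    _ = ‖r‖ := (Complex.norm_def r).symm
end
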